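/- Let V_n^π be the standard n-step value function of an MDP M with per-step cost c that is constant along any chain of deterministic forced transitions, and let 𝕍_n^π be the modified value function on the reduced MDP M' (obtained by collapsing each chain of k deterministic transitions into a single transition of duration k+1 with cost c_n(s,a,s') = c(s,a,s')·min(n, t(s,a)) and recursion 𝕍_n^π(s) = ∑_{s'} p'(s'|s,π(s))(c_n(s,π(s),s') + 𝕍_{n−t(s,π(s))}^π(s'))). Then for every policy π of M, its projection π' onto M', every n ≥ 0 and every state s_a in the reduced state space, V_n^π(s_a) = 𝕍_n^π(s_a). -/
import Mathlib


/-- **Value equivalence for the reduced MDP (Proposition on V = 𝕍).**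

Setup: `M = (S, A, p, c)` is a finite MDP, `π` a policy, `C` the forced
"continue" action, and `forced s` holds iff `s ∈ S ∖ S'` (its only applicable
action is `C`, with deterministic successor).  For each state `s_a ∈ S'`
(i.e. `¬ forced s_a`), `ch s_a` enumerates the maximal chain
`s_a = ch s_a 0 → ch s_a 1 → … → ch s_a (k s_a)` of deterministic transitions
initiated by `π s_a`, all intermediate states being forced; the cost along the
chain is the constant `cbar s_a`; the transition duration is
`t s_a = k s_a + 1`; the reduced kernel is
`p' s_a s_b = p (ch s_a (k s_a)) C s_b` (or `p s_a (π s_a) s_b` if `k s_a = 0`),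
landing only in `S'`.

`V` is the standard value function of `M` under `π` and `W` (written `𝕍` in
the paper) the modified value function of the reduced MDP `M'` with cost
`c_n(s, a, s') = cbar s · min n (t s)`.

Conclusion: `V n s = W n s` for every `n` and every `s ∈ S'`. -/
theorem value_equivalence_reduced_mdp
    {S A : Type*} [Fintype S] [DecidableEq S]
    (p c : S → A → S → ℝ) (π : S → A) (C : A)
    (forced : S → Prop)
    (k : S → ℕ) (ch : S → ℕ → S) (cbar : S → ℝ)
    (t : S → ℕ) (p' : S → S → ℝ)
    (V W : ℕ → S → ℝ)
    -- MDP: probabilities sum to one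
    (hprob : ∀ s a, ∑ s' : S, p s a s' = 1)
    -- the policy of `M` necessarily takes `C` on forced states
    (hπC : ∀ s, forced s → π s = C)
    -- chain structure
    (hch0 : ∀ s, ch s 0 = s)
    (hchain_forced : ∀ s, ¬ forced s → ∀ i, 1 ≤ i → i ≤ k s → forced (ch s i))
    (hchain_det : ∀ s, ¬ forced s → ∀ i, i < k s → ∀ s'',
      p (ch s i) (if i = 0 then π s else C) s''
        = if s'' = ch s (i + 1) then 1 else 0)
    -- the cost is constant along the chain: `c(s_i, ·, ·) = c_{s_a}`
    (hcost : ∀ s, ¬ forced s → ∀ i, i ≤ k s → ∀ s',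
      c (ch s i) (if i = 0 then π s else C) s' = cbar s)
    -- transition duration of the collapsed transition
    (ht : ∀ s, t s = k s + 1)
    -- reduced transition kernel: stochastic last step of the chain
    (hp' : ∀ s, ¬ forced s → ∀ s',
      p' s s' = p (ch s (k s)) (if k s = 0 then π s else C) s')
    -- maximality of the chain: `p'` lands in `S'`
    (hland : ∀ s, ¬ forced s → ∀ s', p' s s' ≠ 0 → ¬ forced s')
    -- standard value function of `M` under `π`
    (hV0 : ∀ s, V 0 s = 0)
    (hV : ∀ n s, V (n + 1) s
      = ∑ s' : S, p s (π s) s' * (c s (π s) s' + V n s'))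
    -- modified value function of `M'` (with `W m = 0` for `m = 0`,
    -- truncated subtraction realizing `𝕍_m = 0` for `m ≤ 0`)
    (hW0 : ∀ s, W 0 s = 0)
    (hW : ∀ n s, 0 < n → W n s
      = ∑ s' : S, p' s s' * (cbar s * (min n (t s) : ℕ) + W (n - t s) s')) :
    ∀ n s, ¬ forced s → V n s = W n s := by
  have hsum1 : ∀ s, ¬ forced s → ∑ s' : S, p' s s' = 1 := by
    intro s hs
    simp only [hp' s hs]
    exact hprob _ _
  have hπch : ∀ s, ¬ forced s → ∀ i, i ≤ k s →
      π (ch s i) = (if i = 0 then π s else C) := by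
    intro s hs i hi
    rcases Nat.eq_zero_or_pos i with h0 | h0
    · subst h0; simp [hch0]
    · rw [if_neg (by omega : ¬ i = 0)]
      exact hπC _ (hchain_forced s hs i h0 hi)
  have step : ∀ s, ¬ forced s → ∀ i, i < k s → ∀ m,
      V (m + 1) (ch s i) = cbar s + V m (ch s (i + 1)) := by
    intro s hs i hi m
    rw [hV, hπch s hs i hi.le]
    rw [Finset.sum_eq_single (ch s (i + 1))]
    · rw [hchain_det s hs i hi, if_pos rfl, one_mul, hcost s hs i hi.le]
    · intro b _ hb
      rw [hchain_det s hs i hi, if_neg hb, zero_mul]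
    · intro h; exact absurd (Finset.mem_univ _) h
  have last : ∀ s, ¬ forced s → ∀ m,
      V (m + 1) (ch s (k s)) = ∑ s' : S, p' s s' * (cbar s + V m s') := by
    intro s hs m
    rw [hV, hπch s hs (k s) le_rfl]
    refine Finset.sum_congr rfl fun s' _ => ?_
    rw [hp' s hs, hcost s hs (k s) le_rfl]
  have lemA : ∀ m s, ¬ forced s → ∀ i, i + m ≤ k s →
      V m (ch s i) = cbar s * (m : ℝ) := by
    intro m
    induction m with
    | zero => intro s hs i _; simp [hV0]
    | succ m ih =>
      intro s hs i hi
      rw [step s hs i (by omega), ih s hs (i + 1) (by omega)]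
      push_cast; ring
  have lemB : ∀ j s, ¬ forced s → ∀ i, i + j = k s → ∀ m,
      V (m + j + 1) (ch s i) = cbar s * (j : ℝ) + V (m + 1) (ch s (k s)) := by
    intro j
    induction j with
    | zero =>
      intro s hs i hi m
      obtain rfl : i = k s := by omega
      simp
    | succ j ih =>
      intro s hs i hi m
      have h1 : m + (j + 1) + 1 = (m + j + 1) + 1 := by ring
      rw [h1, step s hs i (by omega), ih s hs (i + 1) (by omega) m]
      push_cast; ring
  intro n
  induction n using Nat.strong_induction_on with
  | _ n IH =>
    intro s hs
    rcases Nat.eq_zero_or_pos n with rfl | hn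
    · rw [hV0, hW0]
    rw [hW n s hn, ht]
    by_cases hcase : n ≤ k s
    · have hVn : V n s = cbar s * (n : ℝ) := by
        have := lemA n s hs 0 (by omega)
        rwa [hch0] at this
      have hmin : min n (k s + 1) = n := by omega
      have hsub : n - (k s + 1) = 0 := by omega
      rw [hVn, hmin, hsub]
      simp only [hW0, add_zero]
      rw [← Finset.sum_mul, hsum1 s hs, one_mul]
    · push_neg at hcase
      obtain ⟨m, rfl⟩ : ∃ m, n = m + k s + 1 := ⟨n - k s - 1, by omega⟩
      have hVn : V (m + k s + 1) s
          = cbar s * (k s : ℝ) + V (m + 1) (ch s (k s)) := by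
        have := lemB (k s) s hs 0 (by omega) m
        rwa [hch0] at this
      rw [hVn, last s hs m]
      have hmin : min (m + k s + 1) (k s + 1) = k s + 1 := by omega
      have hsub : m + k s + 1 - (k s + 1) = m := by omega
      rw [hmin, hsub]
      have hrepl : ∑ s' : S, p' s s' * (cbar s + V m s')
          = ∑ s' : S, p' s s' * (cbar s + W m s') := by
        refine Finset.sum_congr rfl fun s' _ => ?_
        by_cases h0 : p' s s' = 0
        · rw [h0, zero_mul, zero_mul]
        · rw [IH m (by omega) s' (hland s hs s' h0)]
      rw [hrepl]
      have hsplit : ∑ s' : S, p' s s' * (cbar s * ((k s + 1 : ℕ) : ℝ) + W m s')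
          = (∑ s' : S, p' s s' * (cbar s * (k s : ℝ)))
            + ∑ s' : S, p' s s' * (cbar s + W m s') := by
        rw [← Finset.sum_add_distrib]
        refine Finset.sum_congr rfl fun s' _ => ?_
        push_cast; ring
      rw [hsplit, ← Finset.sum_mul, hsum1 s hs, one_mul]
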